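/- For a vertex v of a graph G, there exists an efficient zero forcing set B containing v and an efficient set of forces of B in which v performs no force if and only if pt(G−v) = pt(G) and Z(G−v) = Z(G) − 1. -/

import Mathlib

open SimpleGraph

variable {V : Type*}

/-- One simultaneous round of the color change rule: all currently forceable
vertices become black. -/
def forceStep (G : SimpleGraph V) (S : Set V) : Set V :=
  S ∪ {w | ∃ v ∈ S, G.Adj v w ∧ ∀ u, G.Adj v u → u ∉ S → u = w}

/-- The (cumulative) set of black vertices after `t` simultaneous rounds,
starting from `B`; so `B^{(t)} = propSet G B t \ propSet G B (t-1)`. -/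
def propSet (G : SimpleGraph V) (B : Set V) : ℕ → Set V
  | 0 => B
  | t + 1 => forceStep G (propSet G B t)

/-- `B` is a zero forcing set of `G`. -/
def IsZFSet (G : SimpleGraph V) (B : Set V) : Prop := ∃ t, propSet G B t = Set.univ

/-- The zero forcing number `Z(G)`. -/
noncomputable def zfNum (G : SimpleGraph V) : ℕ :=
  sInf {n | ∃ B : Set V, IsZFSet G B ∧ B.ncard = n}

/-- `B` is a minimum zero forcing set of `G`. -/
def IsMinZFSet (G : SimpleGraph V) (B : Set V) : Prop := IsZFSet G B ∧ B.ncard = zfNum G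

/-- The propagation time `pt(G,B)` of a zero forcing set `B`. -/
noncomputable def ptSet (G : SimpleGraph V) (B : Set V) : ℕ :=
  sInf {t | propSet G B t = Set.univ}

/-- The minimum propagation time `pt(G)`. -/
noncomputable def ptMin (G : SimpleGraph V) : ℕ :=
  sInf (ptSet G '' {B | IsMinZFSet G B})

/-- The maximum propagation time `PT(G)`. -/
noncomputable def ptMax (G : SimpleGraph V) : ℕ :=
  sSup (ptSet G '' {B | IsMinZFSet G B})

/-- `IsChronList G S L` : starting from black set `S`, the list `L` is a valid
chronological list of forces, performed one at a time, ending with all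
vertices black. -/
def IsChronList (G : SimpleGraph V) : Set V → List (V × V) → Prop
  | S, [] => S = Set.univ
  | S, (v, w) :: L =>
      v ∈ S ∧ w ∉ S ∧ G.Adj v w ∧ (∀ u, G.Adj v u → u ∉ S → u = w) ∧
        IsChronList G (insert w S) L

/-- `F` is a set of forces of `B`: the unordered set of forces of some
chronological list of forces of `B`. -/
def IsForceSet (G : SimpleGraph V) (B : Set V) (F : Set (V × V)) : Prop :=
  ∃ L : List (V × V), IsChronList G B L ∧ {p | p ∈ L} = F

/-- The terminus of a set of forces: the vertices performing no force. -/
def termSet (F : Set (V × V)) : Set V := {v | ∀ w, (v, w) ∉ F}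

/-- The reverse set of forces. -/
def revSet (F : Set (V × V)) : Set (V × V) := (fun p : V × V => (p.2, p.1)) '' F

/-- The (cumulative) set of black vertices after `t` rounds when propagating
using only the forces in `F`, starting from `B`;
so `F^{(t)} = fpropSet G B F t \ fpropSet G B F (t-1)`. -/
def fpropSet (G : SimpleGraph V) (B : Set V) (F : Set (V × V)) : ℕ → Set V
  | 0 => B
  | t + 1 => fpropSet G B F t ∪
      {w | ∃ v, (v, w) ∈ F ∧ v ∈ fpropSet G B F t ∧ w ∉ fpropSet G B F t ∧
        ∀ u, G.Adj v u → u ∉ fpropSet G B F t → u = w}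

/-- The propagation time `pt(G,F)` of a set of forces `F` of `B`. -/
noncomputable def ptForces (G : SimpleGraph V) (B : Set V) (F : Set (V × V)) : ℕ :=
  sInf {t | fpropSet G B F t = Set.univ}

/-- `B` is an efficient zero forcing set of `G`. -/
def IsEffZFSet (G : SimpleGraph V) (B : Set V) : Prop :=
  IsMinZFSet G B ∧ ptSet G B = ptMin G

/-- `F` is an efficient set of forces of the minimum zero forcing set `B`. -/
def IsEffForces (G : SimpleGraph V) (B : Set V) (F : Set (V × V)) : Prop :=
  IsMinZFSet G B ∧ IsForceSet G B F ∧ ptForces G B F = ptMin G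

section Basics
variable {G : SimpleGraph V} {B S : Set V} {F : Set (V × V)}

lemma subset_forceStep (G : SimpleGraph V) (S : Set V) : S ⊆ forceStep G S :=
  Set.subset_union_left

lemma forceStep_mono {S T : Set V} (h : S ⊆ T) : forceStep G S ⊆ forceStep G T := by
  rintro w (hw | ⟨x, hx, hadj, huniq⟩)
  · exact Or.inl (h hw)
  · exact Or.inr ⟨x, h hx, hadj, fun u hu hus => huniq u hu fun hxS => hus (h hxS)⟩

lemma propSet_subset_succ (G : SimpleGraph V) (B : Set V) (t : ℕ) :
    propSet G B t ⊆ propSet G B (t + 1) := subset_forceStep _ _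

lemma propSet_mono_t {t₁ t₂ : ℕ} (h : t₁ ≤ t₂) : propSet G B t₁ ⊆ propSet G B t₂ := by
  induction t₂ with
  | zero => simp_all
  | succ t ih =>
    rcases Nat.lt_or_ge t₁ (t+1) with h' | h'
    · exact (ih (Nat.lt_succ_iff.mp h')).trans (propSet_subset_succ _ _ _)
    · have : t₁ = t + 1 := le_antisymm h h'
      subst this; exact subset_rfl

lemma subset_propSet (G : SimpleGraph V) (B : Set V) (t : ℕ) : B ⊆ propSet G B t :=
  propSet_mono_t (Nat.zero_le t)

lemma propSet_mono_set {S T : Set V} (h : S ⊆ T) (t : ℕ) :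
    propSet G S t ⊆ propSet G T t := by
  induction t with
  | zero => exact h
  | succ t ih => exact forceStep_mono ih

lemma fpropSet_subset_succ (G : SimpleGraph V) (B : Set V) (F : Set (V × V)) (t : ℕ) :
    fpropSet G B F t ⊆ fpropSet G B F (t + 1) := Set.subset_union_left

lemma fpropSet_mono_t {t₁ t₂ : ℕ} (h : t₁ ≤ t₂) : fpropSet G B F t₁ ⊆ fpropSet G B F t₂ := by
  induction t₂ with
  | zero => simp_all
  | succ t ih =>
    rcases Nat.lt_or_ge t₁ (t+1) with h' | h'
    · exact (ih (Nat.lt_succ_iff.mp h')).trans (fpropSet_subset_succ _ _ _ _)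
    · have : t₁ = t + 1 := le_antisymm h h'
      subst this; exact subset_rfl

lemma subset_fpropSet (G : SimpleGraph V) (B : Set V) (F : Set (V × V)) (t : ℕ) :
    B ⊆ fpropSet G B F t := fpropSet_mono_t (Nat.zero_le t)

lemma fpropSet_subset_propSet (hF : ∀ p ∈ F, G.Adj p.1 p.2) (t : ℕ) :
    fpropSet G B F t ⊆ propSet G B t := by
  induction t with
  | zero => exact subset_rfl
  | succ t ih =>
    rintro w (hw | ⟨x, hxF, hx, hw, huniq⟩)
    · exact propSet_subset_succ _ _ _ (ih hw)
    · exact Or.inr ⟨x, ih hx, hF _ hxF, fun u hu hup => huniq u hu fun h' => hup (ih h')⟩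

lemma isZFSet_univ (G : SimpleGraph V) : IsZFSet G Set.univ := ⟨0, rfl⟩

lemma zf_set_nonempty (G : SimpleGraph V) :
    {n | ∃ B : Set V, IsZFSet G B ∧ B.ncard = n}.Nonempty :=
  ⟨_, Set.univ, isZFSet_univ G, rfl⟩

lemma exists_minZFSet (G : SimpleGraph V) : ∃ B : Set V, IsMinZFSet G B := by
  obtain ⟨B, hB, hc⟩ := Nat.sInf_mem (zf_set_nonempty G)
  exact ⟨B, hB, hc⟩

lemma zfNum_le (h : IsZFSet G B) : zfNum G ≤ B.ncard := Nat.sInf_le ⟨B, h, rfl⟩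

lemma ptSet_le {t : ℕ} (h : propSet G B t = Set.univ) : ptSet G B ≤ t := Nat.sInf_le h

lemma propSet_ptSet (h : IsZFSet G B) : propSet G B (ptSet G B) = Set.univ := Nat.sInf_mem h

lemma ptMin_le (h : IsMinZFSet G B) : ptMin G ≤ ptSet G B := Nat.sInf_le ⟨B, h, rfl⟩

lemma exists_effZFSet (G : SimpleGraph V) :
    ∃ B : Set V, IsMinZFSet G B ∧ ptSet G B = ptMin G := by
  have hne : (ptSet G '' {B | IsMinZFSet G B}).Nonempty := by
    obtain ⟨B, hB⟩ := exists_minZFSet G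
    exact ⟨_, B, hB, rfl⟩
  obtain ⟨B, hB, hc⟩ := Nat.sInf_mem hne
  exact ⟨B, hB, hc⟩

lemma propSet_empty (G : SimpleGraph V) (t : ℕ) : propSet G (∅ : Set V) t = ∅ := by
  induction t with
  | zero => rfl
  | succ t ih =>
    show forceStep G (propSet G (∅ : Set V) t) = ∅
    rw [ih]
    ext w
    simp only [forceStep, Set.mem_union, Set.mem_empty_iff_false, Set.mem_setOf_eq, false_or]
    tauto

lemma zfNum_pos [Finite V] [Nonempty V] (G : SimpleGraph V) : 1 ≤ zfNum G := by
  obtain ⟨B, hB, hc⟩ := exists_minZFSet G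
  rw [← hc]
  rcases Set.eq_empty_or_nonempty B with rfl | hne
  · obtain ⟨t, ht⟩ := hB
    rw [propSet_empty] at ht
    exact absurd ht.symm (by simp [Set.univ_nonempty.ne_empty])
  · exact (Set.ncard_pos (Set.toFinite B)).mpr hne
    
end Basics
section Chron
variable {G : SimpleGraph V}

lemma chron_adj : ∀ {L : List (V × V)} {S : Set V}, IsChronList G S L →
    ∀ p ∈ L, G.Adj p.1 p.2
  | [], _, _, p, hp => by simp at hp
  | (x, w) :: L, S, h, p, hp => by
    obtain ⟨h1, h2, h3, h4, h5⟩ := h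
    rcases List.mem_cons.1 hp with rfl | hp
    · exact h3
    · exact chron_adj h5 p hp

lemma chron_target_ne {a : V} : ∀ {L : List (V × V)} {S : Set V}, IsChronList G S L →
    a ∈ S → ∀ p ∈ L, p.2 ≠ a
  | [], _, _, _, p, hp => by simp at hp
  | (x, w) :: L, S, h, ha, p, hp => by
    obtain ⟨h1, h2, h3, h4, h5⟩ := h
    rcases List.mem_cons.1 hp with rfl | hp
    · rintro rfl; exact h2 ha
    · exact chron_target_ne h5 (Set.mem_insert_of_mem _ ha) p hp

lemma chron_fprop {B : Set V} {F : Set (V × V)} :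
    ∀ (L : List (V × V)) (S : Set V) (t : ℕ), IsChronList G S L → (∀ p ∈ L, p ∈ F) →
      S ⊆ fpropSet G B F t → Set.univ ⊆ fpropSet G B F (t + L.length)
  | [], S, t, h, _, hsub => by
    simpa [h ▸ hsub] using (h ▸ hsub : Set.univ ⊆ fpropSet G B F t)
  | (x, w) :: L, S, t, h, hF, hsub => by
    obtain ⟨h1, h2, h3, h4, h5⟩ := h
    have hw1 : w ∈ fpropSet G B F (t + 1) := by
      by_cases hw : w ∈ fpropSet G B F t
      · exact fpropSet_subset_succ _ _ _ _ hw
      · exact Or.inr ⟨x, hF _ List.mem_cons_self, hsub h1, hw,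
          fun u hu hut => h4 u hu fun hus => hut (hsub hus)⟩
    have hsub' : insert w S ⊆ fpropSet G B F (t + 1) := by
      intro z hz
      rcases hz with rfl | hz
      · exact hw1
      · exact fpropSet_subset_succ _ _ _ _ (hsub hz)
    have := chron_fprop L (insert w S) (t + 1) h5 (fun p hp => hF p (List.mem_cons_of_mem _ hp)) hsub'
    calc Set.univ ⊆ fpropSet G B F (t + 1 + L.length) := this
    _ ⊆ _ := fpropSet_mono_t (by simp; omega)

lemma IsForceSet.fprop_univ {B : Set V} {F : Set (V × V)} (h : IsForceSet G B F) :
    ∃ t, fpropSet G B F t = Set.univ := by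
  obtain ⟨L, hL, hset⟩ := h
  refine ⟨L.length, Set.eq_univ_of_univ_subset ?_⟩
  have := chron_fprop (B := B) (F := F) L B 0 hL (fun p hp => hset ▸ hp) subset_rfl
  simpa using this

lemma IsForceSet.adj {B : Set V} {F : Set (V × V)} (h : IsForceSet G B F) :
    ∀ p ∈ F, G.Adj p.1 p.2 := by
  obtain ⟨L, hL, hset⟩ := h
  intro p hp
  exact chron_adj hL p (by rwa [← hset] at hp)

/-- partial chronological list from `S` reaching `S'`. -/
def ChronFrom (G : SimpleGraph V) : Set V → List (V × V) → Set V → Prop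
  | S, [], S' => S' = S
  | S, (x, w) :: L, S' => x ∈ S ∧ w ∉ S ∧ G.Adj x w ∧ (∀ u, G.Adj x u → u ∉ S → u = w) ∧
      ChronFrom G (insert w S) L S'

lemma ChronFrom.append : ∀ {L₁ : List (V × V)} {S S' : Set V} {L₂ : List (V × V)},
    ChronFrom G S L₁ S' → IsChronList G S' L₂ → IsChronList G S (L₁ ++ L₂)
  | [], S, S', L₂, h1, h2 => by rw [List.nil_append]; exact h1 ▸ h2
  | (x, w) :: L₁, S, S', L₂, h1, h2 => by
    obtain ⟨a, b, c, d, e⟩ := h1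
    exact ⟨a, b, c, d, ChronFrom.append e h2⟩

end Chron
section LemA
variable [Finite V]

lemma exists_good_forces (G : SimpleGraph V) (B : Set V) (hB : IsZFSet G B) :
    ∃ F : Set (V × V), IsForceSet G B F ∧ ∀ t, fpropSet G B F t = propSet G B t := by
  classical
  obtain ⟨T₀, hT₀⟩ := hB
  set P : ℕ → Set V := propSet G B with hPdef
  have hex : ∀ w : V, ∃ t, w ∈ P (t + 1) := fun w =>
    ⟨T₀, propSet_subset_succ G B T₀ (show w ∈ P T₀ by rw [hT₀]; trivial)⟩
  set tw : V → ℕ := fun w => Nat.find (hex w) with htwdef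
  have htw_mem : ∀ w, w ∈ P (tw w + 1) := fun w => Nat.find_spec (hex w)
  have htw_not : ∀ w, w ∉ B → w ∉ P (tw w) := by
    intro w hw hmem
    rcases Nat.eq_zero_or_pos (tw w) with h0 | hpos
    · rw [h0] at hmem; exact hw hmem
    · have hlt : tw w - 1 < tw w := Nat.sub_lt hpos one_pos
      have := Nat.find_min (hex w) hlt
      rw [Nat.sub_add_cancel hpos] at this
      exact this hmem
  have htw_eq : ∀ w t, w ∈ P (t + 1) → w ∉ P t → tw w = t := by
    intro w t h1 h2
    have hle : tw w ≤ t := Nat.find_min' (hex w) h1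
    rcases lt_or_eq_of_le hle with hlt | heq
    · exact absurd (propSet_mono_t (Nat.succ_le_of_lt hlt) (htw_mem w)) h2
    · exact heq
  have hforce : ∀ w, w ∉ B → ∃ x, x ∈ P (tw w) ∧ G.Adj x w ∧
      ∀ u, G.Adj x u → u ∉ P (tw w) → u = w := by
    intro w hw
    have h1 := htw_mem w
    have h2 := htw_not w hw
    rcases h1 with h1 | h1
    · exact absurd h1 h2
    · exact h1
  choose f0 hf01 hf02 hf03 using hforce
  set f : V → V := fun w => if h : w ∉ B then f0 w h else w with hfdef
  have hf1 : ∀ w, w ∉ B → f w ∈ P (tw w) := fun w hw => by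
    simp only [hfdef, dif_pos hw]; exact hf01 w hw
  have hf2 : ∀ w, w ∉ B → G.Adj (f w) w := fun w hw => by
    simp only [hfdef, dif_pos hw]; exact hf02 w hw
  have hf3 : ∀ w, w ∉ B → ∀ u, G.Adj (f w) u → u ∉ P (tw w) → u = w := fun w hw => by
    simp only [hfdef, dif_pos hw]; exact hf03 w hw
  set F : Set (V × V) := {p | p.2 ∉ B ∧ p.1 = f p.2} with hFdef
  have hFmem : ∀ w, w ∉ B → (f w, w) ∈ F := fun w hw => ⟨hw, rfl⟩
  have hFtarget : ∀ p ∈ F, p.2 ∉ B := fun p hp => hp.1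
  -- fprop = prop
  have key : ∀ t, fpropSet G B F t = P t := by
    intro t
    induction t with
    | zero => rfl
    | succ t ih =>
      show fpropSet G B F t ∪ _ = forceStep G (P t)
      rw [ih]
      apply Set.Subset.antisymm
      · rintro w (hw | ⟨x, hxF, hx, hw, huniq⟩)
        · exact Or.inl hw
        · obtain ⟨hwB, hfp⟩ := hxF
          refine Or.inr ⟨x, hx, ?_, huniq⟩
          have : x = f w := hfp
          rw [this]; exact hf2 w hwB
      · rintro w (hw | ⟨x, hx, hadj, huniq⟩)
        · exact Or.inl hw
        · by_cases hwt : w ∈ P t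
          · exact Or.inl hwt
          · have hwB : w ∉ B := fun h => hwt (subset_propSet G B t h)
            have heq : tw w = t := htw_eq w t (Or.inr ⟨x, hx, hadj, huniq⟩) hwt
            refine Or.inr ⟨f w, hFmem w hwB, ?_, hwt, ?_⟩
            · have := hf1 w hwB; rwa [heq] at this
            · intro u hu hut
              exact hf3 w hwB u hu (heq ▸ hut)
  -- one round, one force at a time
  have round : ∀ (n t : ℕ) (S : Set V), P t ⊆ S → S ⊆ P (t + 1) →
      (P (t + 1) \ S).ncard = n →
      ∃ L, ChronFrom G S L (P (t + 1)) ∧ {p | p ∈ L} = {p | p ∈ F ∧ p.2 ∈ P (t + 1) \ S} := by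
    intro n
    induction n with
    | zero =>
      intro t S h1 h2 h3
      have hdiff : P (t + 1) \ S = ∅ := (Set.ncard_eq_zero (Set.toFinite _)).mp h3
      have hSP : S = P (t + 1) :=
        Set.Subset.antisymm h2 (by rw [← Set.diff_union_of_subset h2, hdiff]; simp)
      exact ⟨[], hSP.symm, by ext p; simp [hdiff]⟩
    | succ n ihn =>
      intro t S h1 h2 h3
      have hne : (P (t + 1) \ S).Nonempty := by
        rw [← Set.ncard_pos (Set.toFinite _)]; omega
      obtain ⟨w, hwP, hwS⟩ := hne
      have hwPt : w ∉ P t := fun h => hwS (h1 h)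
      have hwB : w ∉ B := fun h => hwPt (subset_propSet G B t h)
      have heq : tw w = t := htw_eq w t hwP hwPt
      have hfx : f w ∈ S := h1 (heq ▸ hf1 w hwB)
      have huniqS : ∀ u, G.Adj (f w) u → u ∉ S → u = w := fun u hu hus =>
        hf3 w hwB u hu (heq ▸ fun h => hus (h1 h))
      obtain ⟨L', hL', hset'⟩ := ihn t (insert w S)
        (h1.trans (Set.subset_insert _ _))
        (Set.insert_subset hwP h2)
        (by
          have hrw : P (t + 1) \ insert w S = (P (t + 1) \ S) \ {w} := by
            ext z; simp only [Set.mem_diff, Set.mem_insert_iff, Set.mem_singleton_iff]; tauto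
          rw [hrw, Set.ncard_diff_singleton_of_mem
            (show w ∈ P (t + 1) \ S from ⟨hwP, hwS⟩), h3]
          omega)
      refine ⟨(f w, w) :: L', ⟨hfx, hwS, hf2 w hwB, huniqS, hL'⟩, ?_⟩
      ext p
      simp only [Set.mem_setOf_eq, List.mem_cons]
      constructor
      · rintro (rfl | hp)
        · exact ⟨hFmem w hwB, hwP, hwS⟩
        · obtain ⟨hpF, hp1, hp2⟩ := (Set.ext_iff.mp hset' p).mp hp
          exact ⟨hpF, hp1, fun h => hp2 (Set.mem_insert_of_mem _ h)⟩
      · rintro ⟨hpF, hp1, hp2⟩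
        by_cases hpw : p.2 = w
        · left
          refine Prod.ext ?_ hpw
          have : p.1 = f p.2 := hpF.2
          rw [this, hpw]
        · right
          refine (Set.ext_iff.mp hset' p).mpr ⟨hpF, hp1, ?_⟩
          rintro (h | h)
          · exact hpw h
          · exact hp2 h
  -- descending induction building the full list
  set T : ℕ := ptSet G B with hTdef
  have hT : P T = Set.univ := propSet_ptSet ⟨T₀, hT₀⟩
  have main : ∀ d, ∃ L, IsChronList G (P (T - d)) L ∧
      {p | p ∈ L} = {p | p ∈ F ∧ p.2 ∉ P (T - d)} := by
    intro d
    induction d with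
    | zero =>
      refine ⟨[], by simpa [IsChronList] using hT, ?_⟩
      ext p
      simp [hT]
    | succ d ihd =>
      obtain ⟨L₂, hL₂, hset₂⟩ := ihd
      by_cases hTd : T ≤ d
      · have : T - (d + 1) = T - d := by omega
        rw [this]
        exact ⟨L₂, hL₂, hset₂⟩
      · have hstep : T - (d + 1) + 1 = T - d := by omega
        rw [← hstep] at hL₂ hset₂
        set t := T - (d + 1) with htdef
        obtain ⟨L₁, hL₁, hset₁⟩ := round ((P (t + 1) \ P t).ncard) t (P t)
          subset_rfl (propSet_subset_succ G B t) rfl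
        refine ⟨L₁ ++ L₂, ChronFrom.append hL₁ hL₂, ?_⟩
        ext p
        simp only [Set.mem_setOf_eq, List.mem_append]
        constructor
        · rintro (hp | hp)
          · obtain ⟨hpF, hp1, hp2⟩ := (Set.ext_iff.mp hset₁ p).mp hp
            exact ⟨hpF, hp2⟩
          · obtain ⟨hpF, hp2⟩ := (Set.ext_iff.mp hset₂ p).mp hp
            exact ⟨hpF, fun h => hp2 (propSet_subset_succ G B t h)⟩
        · rintro ⟨hpF, hp2⟩
          by_cases hp1 : p.2 ∈ P (t + 1)
          · exact Or.inl ((Set.ext_iff.mp hset₁ p).mpr ⟨hpF, hp1, hp2⟩)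
          · exact Or.inr ((Set.ext_iff.mp hset₂ p).mpr ⟨hpF, hp1⟩)
  obtain ⟨L, hL, hset⟩ := main T
  rw [Nat.sub_self] at hL hset
  have hFeq : {p | p ∈ L} = F := by
    rw [hset]
    ext p
    simp only [Set.mem_setOf_eq]
    exact ⟨fun h => h.1, fun h => ⟨h, hFtarget p h⟩⟩
  exact ⟨F, ⟨L, hL, hFeq⟩, key⟩

end LemA
section Corr
variable {G : SimpleGraph V} {v : V}

lemma prop_lift (S : Set ↥{u : V | u ≠ v}) (t : ℕ) :
    Subtype.val '' (propSet (G.induce {u : V | u ≠ v}) S t) ∪ {v} ⊆ propSet G (Subtype.val '' S ∪ {v}) t := by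
  induction t with
  | zero => exact subset_rfl
  | succ t ih =>
    rintro x (⟨w, hw, rfl⟩ | hx)
    · rcases hw with hw | ⟨s, hs, hadj, huniq⟩
      · exact subset_forceStep _ _ (ih (Or.inl ⟨w, hw, rfl⟩))
      · refine Or.inr ⟨↑s, ih (Or.inl ⟨s, hs, rfl⟩), hadj, ?_⟩
        intro u hu hup
        have huv : u ≠ v := fun h => hup (h ▸ ih (Or.inr rfl))
        have hadj' : ((G.induce {u : V | u ≠ v})).Adj s ⟨u, huv⟩ := hu
        have : (⟨u, huv⟩ : ↥{u : V | u ≠ v}) ∉ propSet (G.induce {u : V | u ≠ v}) S t := fun h =>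
          hup (ih (Or.inl ⟨_, h, rfl⟩))
        exact congrArg Subtype.val (huniq ⟨u, huv⟩ hadj' this)
    · exact propSet_subset_succ _ _ _ (ih (Or.inr hx))

lemma zf_lift (hZ : IsZFSet (G.induce {u : V | u ≠ v}) S) : IsZFSet G (Subtype.val '' S ∪ {v}) := by
  obtain ⟨t, ht⟩ := hZ
  refine ⟨t, Set.eq_univ_of_univ_subset fun x _ => ?_⟩
  by_cases hx : x = v
  · exact prop_lift S t (Or.inr (by simp [hx]))
  · exact prop_lift S t (Or.inl ⟨⟨x, hx⟩, by rw [ht]; trivial, rfl⟩)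

lemma ptSet_lift (hZ : IsZFSet (G.induce {u : V | u ≠ v}) S) :
    ptSet G (Subtype.val '' S ∪ {v}) ≤ ptSet (G.induce {u : V | u ≠ v}) S := by
  apply ptSet_le
  apply Set.eq_univ_of_univ_subset
  intro x _
  by_cases hx : x = v
  · exact prop_lift S _ (Or.inr (by simp [hx]))
  · exact prop_lift S _ (Or.inl ⟨⟨x, hx⟩, by rw [propSet_ptSet hZ]; trivial, rfl⟩)

lemma ncard_lift [Finite V] (S : Set ↥{u : V | u ≠ v}) :
    (Subtype.val '' S ∪ {v}).ncard = S.ncard + 1 := by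
  have hv : v ∉ Subtype.val '' S := by
    rintro ⟨w, -, hw⟩
    exact w.2 hw
  rw [Set.union_singleton, Set.ncard_insert_of_notMem hv (Set.toFinite _),
    Set.ncard_image_of_injective _ Subtype.val_injective]

lemma zfNum_le_del [Finite V] : zfNum G ≤ zfNum (G.induce {u : V | u ≠ v}) + 1 := by
  obtain ⟨B₀, hB₀⟩ := exists_minZFSet (G := (G.induce {u : V | u ≠ v}))
  calc zfNum G ≤ (Subtype.val '' B₀ ∪ {v}).ncard := zfNum_le (zf_lift hB₀.1)
  _ = B₀.ncard + 1 := ncard_lift B₀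
  _ = zfNum (G.induce {u : V | u ≠ v}) + 1 := by rw [hB₀.2]

lemma ptMin_le_del [Finite V] (hZ : zfNum G = zfNum (G.induce {u : V | u ≠ v}) + 1) : ptMin G ≤ ptMin (G.induce {u : V | u ≠ v}) := by
  obtain ⟨B₀, hB₀, hpt⟩ := exists_effZFSet (G := (G.induce {u : V | u ≠ v}))
  have hmin : IsMinZFSet G (Subtype.val '' B₀ ∪ {v}) :=
    ⟨zf_lift hB₀.1, by rw [ncard_lift, hB₀.2, ← hZ]⟩
  calc ptMin G ≤ ptSet G (Subtype.val '' B₀ ∪ {v}) := ptMin_le hmin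
  _ ≤ ptSet (G.induce {u : V | u ≠ v}) B₀ := ptSet_lift hB₀.1
  _ = ptMin (G.induce {u : V | u ≠ v}) := hpt

lemma fprop_corr {B : Set V} {F : Set (V × V)} (hv : v ∈ B)
    (hF : ∀ p ∈ F, p.1 ≠ v ∧ p.2 ≠ v) (t : ℕ) :
    fpropSet (G.induce {u : V | u ≠ v}) {u | ↑u ∈ B} {p | ((p.1 : V), (p.2 : V)) ∈ F} t
      = {u : ↥{u : V | u ≠ v} | ↑u ∈ fpropSet G B F t} := by
  induction t with
  | zero => rfl
  | succ t ih =>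
    have hvt : v ∈ fpropSet G B F t := subset_fpropSet G B F t hv
    ext u
    constructor
    · rintro (hu | ⟨s, hsF, hs, hu, huniq⟩)
      · exact fpropSet_subset_succ G B F t ((Set.ext_iff.mp ih u).mp hu)
      · rw [ih] at hs hu
        refine Or.inr ⟨↑s, hsF, hs, hu, ?_⟩
        intro z hz hzt
        have hzv : z ≠ v := fun h => hzt (h ▸ hvt)
        have : (⟨z, hzv⟩ : ↥{u : V | u ≠ v}) ∉ fpropSet (G.induce {u : V | u ≠ v}) {u | ↑u ∈ B} {p | ((p.1 : V), (p.2 : V)) ∈ F} t := by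
          rw [ih]; exact hzt
        exact congrArg Subtype.val (huniq ⟨z, hzv⟩ hz this)
    · rintro (hu | ⟨s, hsF, hs, hu, huniq⟩)
      · exact Or.inl (by rw [ih]; exact hu)
      · have hsv : s ≠ v := (hF _ hsF).1
        refine Or.inr ⟨⟨s, hsv⟩, hsF, by rw [ih]; exact hs, by rw [ih]; exact hu, ?_⟩
        intro z hz hzt
        rw [ih] at hzt
        exact Subtype.val_injective (huniq ↑z hz hzt)

end Corr
section Main
variable {G : SimpleGraph V} {v : V}

lemma chron_lift : ∀ (L : List (↥{u : V | u ≠ v} × ↥{u : V | u ≠ v}))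
    (S : Set ↥{u : V | u ≠ v}),
    IsChronList (G.induce {u : V | u ≠ v}) S L →
    IsChronList G (Subtype.val '' S ∪ {v}) (L.map (Prod.map Subtype.val Subtype.val))
  | [], S, h => by
    show Subtype.val '' S ∪ {v} = Set.univ
    rw [h]
    ext x
    simp only [Set.mem_union, Set.mem_univ, iff_true]
    by_cases hx : x = v
    · exact Or.inr hx
    · exact Or.inl ⟨⟨x, hx⟩, trivial, rfl⟩
  | (x, w) :: L, S, h => by
    obtain ⟨h1, h2, h3, h4, h5⟩ := h
    refine ⟨Or.inl ⟨x, h1, rfl⟩, ?_, h3, ?_, ?_⟩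
    · rintro (⟨w', hw', heq⟩ | hw)
      · exact h2 (Subtype.val_injective heq ▸ hw')
      · exact w.2 hw
    · intro u hu hup
      have huv : u ≠ v := fun h => hup (Or.inr h)
      have hS : (⟨u, huv⟩ : ↥{u : V | u ≠ v}) ∉ S := fun h => hup (Or.inl ⟨_, h, rfl⟩)
      exact congrArg Subtype.val (h4 ⟨u, huv⟩ hu hS)
    · have := chron_lift L (insert w S) h5
      rwa [Set.image_insert_eq, Set.insert_union] at this

lemma mem_map_list_set {α β : Type*} (f : α → β) (L : List α) :
    {p | p ∈ L.map f} = f '' {p | p ∈ L} := by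
  ext p
  simp [List.mem_map, Set.mem_image]

end Main

theorem eff_nonforcing_vertex_iff' {V : Type*} [Finite V] (G : SimpleGraph V) (v : V) :
    (∃ (B : Set V) (F : Set (V × V)), IsEffZFSet G B ∧ v ∈ B ∧ IsEffForces G B F ∧
        ∀ w, (v, w) ∉ F) ↔
      (ptMin (G.induce {u | u ≠ v}) = ptMin G ∧
        zfNum (G.induce {u | u ≠ v}) = zfNum G - 1) := by
  have : Nonempty V := ⟨v⟩
  constructor
  · rintro ⟨B, F, ⟨hBmin, hBpt⟩, hvB, ⟨-, hFforce, hFpt⟩, hvF⟩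
    -- no force involves v
    have hFne : ∀ p ∈ F, p.1 ≠ v ∧ p.2 ≠ v := by
      intro p hp
      constructor
      · rintro rfl
        exact hvF p.2 (by rwa [← Prod.mk.eta (p := p)] at hp)
      · obtain ⟨L, hL, hset⟩ := hFforce
        exact chron_target_ne hL hvB p (by rwa [← hset] at hp)
    have hFadj : ∀ p ∈ F, G.Adj p.1 p.2 := IsForceSet.adj hFforce
    -- fprop reaches univ at time ptForces = ptMin G
    have hfuniv : ∃ t, fpropSet G B F t = Set.univ := IsForceSet.fprop_univ hFforce
    have hfT : fpropSet G B F (ptForces G B F) = Set.univ := Nat.sInf_mem hfuniv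
    -- restrict to G - v
    set B' : Set ↥{u : V | u ≠ v} := {u | ↑u ∈ B} with hB'def
    set F' : Set (↥{u : V | u ≠ v} × ↥{u : V | u ≠ v}) :=
      {p | ((p.1 : V), (p.2 : V)) ∈ F} with hF'def
    have hcorr := fun t => fprop_corr (G := G) (v := v) (B := B) (F := F) hvB hFne t
    have hF'adj : ∀ p ∈ F', (G.induce {u : V | u ≠ v}).Adj p.1 p.2 := fun p hp =>
      hFadj _ hp
    have hf'T : fpropSet (G.induce {u : V | u ≠ v}) B' F' (ptForces G B F) = Set.univ := by
      rw [hcorr]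
      ext u
      simp [hfT]
    have hZ' : IsZFSet (G.induce {u : V | u ≠ v}) B' := by
      refine ⟨ptForces G B F, Set.eq_univ_of_univ_subset ?_⟩
      rw [← hf'T]
      exact fpropSet_subset_propSet hF'adj _
    have hptB' : ptSet (G.induce {u : V | u ≠ v}) B' ≤ ptForces G B F := by
      apply ptSet_le
      apply Set.eq_univ_of_univ_subset
      rw [← hf'T]
      exact fpropSet_subset_propSet hF'adj _
    -- cardinality
    have hcard : B'.ncard = B.ncard - 1 := by
      have himg : Subtype.val '' B' = B \ {v} := by
        ext x
        constructor
        · rintro ⟨u, hu, rfl⟩; exact ⟨hu, u.2⟩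
        · rintro ⟨hx, hxv⟩; exact ⟨⟨x, hxv⟩, hx, rfl⟩
      rw [← Set.ncard_image_of_injective B' Subtype.val_injective, himg,
        Set.ncard_diff_singleton_of_mem hvB]
    have hZle : zfNum (G.induce {u | u ≠ v}) ≤ zfNum G - 1 := by
      calc zfNum (G.induce {u | u ≠ v}) ≤ B'.ncard := zfNum_le hZ'
      _ = B.ncard - 1 := hcard
      _ = zfNum G - 1 := by rw [hBmin.2]
    have hZge : zfNum G ≤ zfNum (G.induce {u | u ≠ v}) + 1 := zfNum_le_del
    have hpos : 1 ≤ zfNum G := zfNum_pos G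
    have hZeq : zfNum (G.induce {u | u ≠ v}) = zfNum G - 1 := by omega
    refine ⟨?_, hZeq⟩
    -- propagation times
    have hminB' : IsMinZFSet (G.induce {u | u ≠ v}) B' := ⟨hZ', by rw [hcard, hBmin.2, hZeq]⟩
    have h1 : ptMin (G.induce {u | u ≠ v}) ≤ ptMin G := by
      calc ptMin (G.induce {u | u ≠ v}) ≤ ptSet (G.induce {u | u ≠ v}) B' := ptMin_le hminB'
      _ ≤ ptForces G B F := hptB'
      _ = ptMin G := hFpt
    have h2 : ptMin G ≤ ptMin (G.induce {u | u ≠ v}) := ptMin_le_del (by omega)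
    omega
  · rintro ⟨hpt, hz⟩
    have hpos : 1 ≤ zfNum G := zfNum_pos G
    have hZ : zfNum G = zfNum (G.induce {u | u ≠ v}) + 1 := by
      have := zfNum_le_del (G := G) (v := v)
      omega
    obtain ⟨B₀, hB₀min, hB₀pt⟩ := exists_effZFSet (G := G.induce {u : V | u ≠ v})
    obtain ⟨F₀, hF₀force, hF₀prop⟩ :=
      exists_good_forces (G.induce {u : V | u ≠ v}) B₀ hB₀min.1
    set B : Set V := Subtype.val '' B₀ ∪ {v} with hBdef
    set F : Set (V × V) := Prod.map Subtype.val Subtype.val '' F₀ with hFdef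
    have hvB : v ∈ B := Or.inr rfl
    have hvF : ∀ w, (v, w) ∉ F := by
      rintro w ⟨⟨a, b⟩, -, heq⟩
      have : (a : V) = v := congrArg Prod.fst heq
      exact a.2 this
    have hFne : ∀ p ∈ F, p.1 ≠ v ∧ p.2 ≠ v := by
      rintro p ⟨⟨a, b⟩, -, rfl⟩
      exact ⟨a.2, b.2⟩
    -- B is a minimum ZFS of G
    have hBzf : IsZFSet G B := zf_lift hB₀min.1
    have hBcard : B.ncard = zfNum G := by
      rw [hBdef, ncard_lift, hB₀min.2, ← hZ]
    have hBmin : IsMinZFSet G B := ⟨hBzf, hBcard⟩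
    -- pt of B
    have hptle : ptSet G B ≤ ptMin G := by
      calc ptSet G B ≤ ptSet (G.induce {u : V | u ≠ v}) B₀ := ptSet_lift hB₀min.1
      _ = ptMin (G.induce {u : V | u ≠ v}) := hB₀pt
      _ = ptMin G := hpt
    have hBpt : ptSet G B = ptMin G := le_antisymm hptle (ptMin_le hBmin)
    -- F is a force set of B
    obtain ⟨L₀, hL₀, hset₀⟩ := hF₀force
    have hLlift := chron_lift (G := G) (v := v) L₀ B₀ hL₀
    have hFforce : IsForceSet G B F := by
      refine ⟨L₀.map (Prod.map Subtype.val Subtype.val), hLlift, ?_⟩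
      rw [mem_map_list_set, hset₀]
    -- ptForces of F
    have hB'eq : {u : ↥{u : V | u ≠ v} | ↑u ∈ B} = B₀ := by
      ext u
      simp only [Set.mem_setOf_eq, hBdef, Set.mem_union, Set.mem_singleton_iff]
      constructor
      · rintro (⟨w, hw, heq⟩ | h)
        · rwa [← Subtype.val_injective heq]
        · exact absurd h u.2
      · intro h; exact Or.inl ⟨u, h, rfl⟩
    have hF'eq : {p : ↥{u : V | u ≠ v} × ↥{u : V | u ≠ v} |
        ((p.1 : V), (p.2 : V)) ∈ F} = F₀ := by
      ext p
      simp only [Set.mem_setOf_eq, hFdef, Set.mem_image]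
      constructor
      · rintro ⟨⟨a, b⟩, hab, heq⟩
        have h1 : (a : V) = ↑p.1 := congrArg Prod.fst heq
        have h2 : (b : V) = ↑p.2 := congrArg Prod.snd heq
        have : (a, b) = p := Prod.ext
          (Subtype.val_injective h1) (Subtype.val_injective h2)
        rwa [← this]
      · intro h
        exact ⟨p, h, rfl⟩
    have hcorr := fun t => fprop_corr (G := G) (v := v) (B := B) (F := F) hvB hFne t
    rw [hB'eq, hF'eq] at hcorr
    have hsets : {t | fpropSet G B F t = Set.univ}
        = {t | fpropSet (G.induce {u : V | u ≠ v}) B₀ F₀ t = Set.univ} := by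
      ext t
      simp only [Set.mem_setOf_eq, hcorr t]
      constructor
      · intro h
        ext u
        simp [h]
      · intro h
        ext x
        simp only [Set.mem_univ, iff_true]
        by_cases hx : x = v
        · exact subset_fpropSet G B F t (hx ▸ hvB)
        · exact (Set.ext_iff.mp h ⟨x, hx⟩).mpr trivial
    have hptF : ptForces G B F = ptMin G := by
      show sInf _ = ptMin G
      rw [hsets]
      have : sInf {t | fpropSet (G.induce {u : V | u ≠ v}) B₀ F₀ t = Set.univ}
          = ptSet (G.induce {u : V | u ≠ v}) B₀ := by
        unfold ptSet
        congr 1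
        ext t
        simp [hF₀prop t]
      rw [this, hB₀pt, hpt]
    exact ⟨B, F, ⟨hBmin, hBpt⟩, hvB, ⟨hBmin, hFforce, hptF⟩, hvF⟩

/-- There exists an efficient zero forcing set `B` of `G` containing `v` and an
efficient set of forces of `B` in which `v` performs no force, if and only if
`pt(G - v) = pt(G)` and `Z(G - v) = Z(G) - 1`. -/
theorem eff_nonforcing_vertex_iff {V : Type*} [Finite V] (G : SimpleGraph V) (v : V) :
    (∃ (B : Set V) (F : Set (V × V)), IsEffZFSet G B ∧ v ∈ B ∧ IsEffForces G B F ∧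
        ∀ w, (v, w) ∉ F) ↔
      (ptMin (G.induce {u | u ≠ v}) = ptMin G ∧
        zfNum (G.induce {u | u ≠ v}) = zfNum G - 1) := eff_nonforcing_vertex_iff' G v
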